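/- Let G be a finite simple graph with at least one vertex, let k ≥ 0 be an integer, let p = χ(G) + k, and let σ be a proper colouring of G using exactly p colours. Then for every colour class U of σ there exists a set X ⊆ V(G) with |X| ≤ k+1 and X ∩ U ≠ ∅ such that the closed neighbourhood N[X] meets every colour class of σ, i.e. |σ(N[X])| = p. -/

import Mathlib

open SimpleGraph

/-- `σ` is a proper colouring of `G` with colours in `ℕ`. -/
def IsProperColoring {V : Type*} (G : SimpleGraph V) (σ : V → ℕ) : Prop :=
  ∀ ⦃u v : V⦄, G.Adj u v → σ u ≠ σ v

/-- The chromatic number of `G`, as a natural number. -/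
noncomputable def chromNum {V : Type*} (G : SimpleGraph V) : ℕ :=
  sInf {n : ℕ | G.Colorable n}

/-- The discrepancy `φ_σ(G)` of a proper colouring `σ` of `G`: the maximum, over all
induced subgraphs `G[S]` of `G`, of `|σ(S)| - χ(G[S])`. -/
noncomputable def colDisc {V : Type*} (G : SimpleGraph V) (σ : V → ℕ) : ℤ :=
  sSup {z : ℤ | ∃ S : Set V, z = ((σ '' S).ncard : ℤ) - (chromNum (G.induce S) : ℤ)}

/-- The chromatic discrepancy `φ(G)`: the minimum of `φ_σ(G)` over all proper
colourings `σ` of `G`. -/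
noncomputable def chromDisc {V : Type*} (G : SimpleGraph V) : ℤ :=
  sInf {z : ℤ | ∃ σ : V → ℕ, IsProperColoring G σ ∧ z = colDisc G σ}

/-- `G` is locally `s`-colourable: the closed neighbourhood of every vertex induces an
`s`-colourable subgraph. -/
def LocallyColorable {V : Type*} (G : SimpleGraph V) (s : ℕ) : Prop :=
  ∀ v : V, chromNum (G.induce (insert v (G.neighborSet v))) ≤ s

/-- The set of vertices at distance at most `r` from `v` in `G`. -/
def ballSet {V : Type*} (G : SimpleGraph V) (v : V) (r : ℕ) : Set V :=
  {u : V | ∃ w : G.Walk v u, w.length ≤ r}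

/-- `G` is `r`-locally `s`-colourable: every ball of radius `r` induces an
`s`-colourable subgraph. -/
def RLocallyColorable {V : Type*} (G : SimpleGraph V) (r s : ℕ) : Prop :=
  ∀ v : V, chromNum (G.induce (ballSet G v r)) ≤ s

/-- `G` contains no cycle of length exactly `n` as a (not necessarily induced) subgraph. -/
def CycleLenFree {V : Type*} (G : SimpleGraph V) (n : ℕ) : Prop :=
  ∀ (v : V) (w : G.Walk v v), w.IsCycle → w.length ≠ n

/-- `H` is `k`-degenerate: every non-empty (induced) subgraph contains a vertex of
degree at most `k` in it. -/
def Degenerate {α : Type*} (H : SimpleGraph α) (k : ℕ) : Prop :=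
  ∀ S : Set α, S.Nonempty → ∃ a ∈ S, {b | b ∈ S ∧ H.Adj a b}.ncard ≤ k

/-- `G` is co-locally `s`-colourable: for all vertices `u ≠ v`,
`χ(G[{u} ∪ N(v)]) ≤ s`. -/
def CoLocallyColorable {V : Type*} (G : SimpleGraph V) (s : ℕ) : Prop :=
  ∀ v u : V, u ≠ v → chromNum (G.induce (insert u (G.neighborSet v))) ≤ s

/-- The minimum of `χ(G[X])` over all subsets `X ⊆ V(G)` spanning exactly `p` colours
of `σ` (a rainbow cover of `σ` when `σ` uses exactly `p` colours). -/
noncomputable def minRainbowChrom {V : Type*} (G : SimpleGraph V) (σ : V → ℕ) (p : ℕ) : ℕ :=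
  sInf {c : ℕ | ∃ X : Set V, (σ '' X).ncard = p ∧ c = chromNum (G.induce X)}

/-- `f_G(p)`: the maximum, over all proper colourings `σ` of `G` using exactly `p`
colours, of the minimum chromatic number of a rainbow cover of `σ`. -/
noncomputable def fG {V : Type*} (G : SimpleGraph V) (p : ℕ) : ℕ :=
  sSup {m : ℕ | ∃ σ : V → ℕ, IsProperColoring G σ ∧ (σ '' Set.univ).ncard = p ∧
    m = minRainbowChrom G σ p}

/-- The closed neighbourhood `N[X]` of a set `X` of vertices. -/
def closedNbhd {V : Type*} (G : SimpleGraph V) (X : Set V) : Set V :=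
  X ∪ {u : V | ∃ x ∈ X, G.Adj x u}

universe u

section RainbowAux

lemma closedNbhd_mono {V : Type u} {G : SimpleGraph V} {X Y : Set V} (h : X ⊆ Y) :
    closedNbhd G X ⊆ closedNbhd G Y := by
  rintro w (hw | ⟨x, hx, hadj⟩)
  · exact Or.inl (h hw)
  · exact Or.inr ⟨x, h hx, hadj⟩

lemma mem_closedNbhd_self {V : Type u} {G : SimpleGraph V} {X : Set V} {x : V} (hx : x ∈ X) :
    x ∈ closedNbhd G X := Or.inl hx

lemma mem_closedNbhd_adj {V : Type u} {G : SimpleGraph V} {X : Set V} {x w : V} (hx : x ∈ X)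
    (h : G.Adj x w) : w ∈ closedNbhd G X := Or.inr ⟨x, hx, h⟩

lemma colorable_ncard {V : Type u} [Fintype V] (G : SimpleGraph V) (σ : V → ℕ)
    (hσ : IsProperColoring G σ) : G.Colorable ((σ '' Set.univ).ncard) := by
  classical
  have hfin : (σ '' Set.univ).Finite := Set.finite_univ.image σ
  haveI : Fintype ↥(σ '' Set.univ) := hfin.fintype
  have hcard : Fintype.card ↥(σ '' Set.univ) = (σ '' Set.univ).ncard := by
    rw [← Nat.card_eq_fintype_card, Nat.card_coe_set_eq]
  have hcol : G.Colorable (Fintype.card ↥(σ '' Set.univ)) := by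
    refine ⟨SimpleGraph.Coloring.mk
      (fun v => (Fintype.equivFin ↥(σ '' Set.univ)) ⟨σ v, ⟨v, Set.mem_univ v, rfl⟩⟩) ?_⟩
    intro a b hadj h
    apply hσ hadj
    have h3 := (Fintype.equivFin ↥(σ '' Set.univ)).injective h
    exact congrArg Subtype.val h3
  rwa [hcard] at hcol

lemma chromNum_colorable {V : Type u} [Fintype V] (G : SimpleGraph V) :
    G.Colorable (chromNum G) := by
  have hmem : Fintype.card V ∈ {n : ℕ | G.Colorable n} := G.colorable_of_fintype
  exact Nat.sInf_mem ⟨_, hmem⟩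

lemma chromNum_pos {V : Type u} [Fintype V] [Nonempty V] (G : SimpleGraph V) :
    0 < chromNum G := by
  rcases Nat.eq_zero_or_pos (chromNum G) with h | h
  · exfalso
    have hc : G.Colorable 0 := by rw [← h]; exact chromNum_colorable G
    obtain ⟨Co⟩ := hc
    exact (Co (Classical.arbitrary V)).elim0
  · exact h

/-- In a proper colouring using exactly `χ(G)` colours, every colour class contains a
vertex whose closed neighbourhood sees all colours. -/
lemma exists_full_vertex {V : Type u} [Fintype V] [Nonempty V] (G : SimpleGraph V) (τ : V → ℕ)
    (hτ : IsProperColoring G τ) (himg : (τ '' Set.univ).ncard = chromNum G)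
    {c : ℕ} (hc : c ∈ τ '' Set.univ) :
    ∃ u : V, τ u = c ∧ τ '' closedNbhd G {u} = τ '' Set.univ := by
  classical
  by_contra hcon
  push_neg at hcon
  have hCfin : (τ '' Set.univ).Finite := Set.finite_univ.image τ
  have key : ∀ u : V, τ u = c → ∃ μ, μ ∈ τ '' Set.univ ∧ μ ∉ τ '' closedNbhd G {u} := by
    intro u hu
    have hsub : τ '' closedNbhd G {u} ⊆ τ '' Set.univ := Set.image_mono (Set.subset_univ _)
    rcases Set.exists_of_ssubset (ssubset_of_subset_of_ne hsub (hcon u hu)) with ⟨μ, h1, h2⟩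
    exact ⟨μ, h1, h2⟩
  set τ' : V → ℕ := fun x => if hx : τ x = c then Classical.choose (key x hx) else τ x with hτ'def
  have hτ'eq1 : ∀ (x : V) (hx : τ x = c), τ' x = Classical.choose (key x hx) :=
    fun x hx => dif_pos hx
  have hτ'eq2 : ∀ (x : V), τ x ≠ c → τ' x = τ x := fun x hx => dif_neg hx
  have hτ'spec : ∀ (x : V) (hx : τ x = c),
      τ' x ∈ τ '' Set.univ ∧ τ' x ∉ τ '' closedNbhd G {x} := by
    intro x hx
    rw [hτ'eq1 x hx]
    exact Classical.choose_spec (key x hx)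
  have hτ'p : IsProperColoring G τ' := by
    intro x y hadj
    have hne := hτ hadj
    by_cases hx : τ x = c <;> by_cases hy : τ y = c
    · exact absurd (hx.trans hy.symm) hne
    · rw [hτ'eq2 y hy]
      intro heq
      apply (hτ'spec x hx).2
      rw [heq]
      exact ⟨y, mem_closedNbhd_adj rfl hadj, rfl⟩
    · rw [hτ'eq2 x hx]
      intro heq
      apply (hτ'spec y hy).2
      rw [← heq]
      exact ⟨x, mem_closedNbhd_adj rfl hadj.symm, rfl⟩
    · rw [hτ'eq2 x hx, hτ'eq2 y hy]
      exact hne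
  have himg' : τ' '' Set.univ ⊆ (τ '' Set.univ) \ {c} := by
    rintro a ⟨x, -, rfl⟩
    by_cases hx : τ x = c
    · refine ⟨(hτ'spec x hx).1, ?_⟩
      intro ha
      apply (hτ'spec x hx).2
      have : τ' x = c := ha
      rw [this]
      exact ⟨x, mem_closedNbhd_self rfl, hx⟩
    · rw [hτ'eq2 x hx]
      exact ⟨⟨x, Set.mem_univ x, rfl⟩, hx⟩
  have hle : chromNum G ≤ (τ' '' Set.univ).ncard := Nat.sInf_le (colorable_ncard G τ' hτ'p)
  have h1 : (τ' '' Set.univ).ncard ≤ ((τ '' Set.univ) \ {c}).ncard :=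
    Set.ncard_le_ncard himg' hCfin.diff
  have h2 : ((τ '' Set.univ) \ {c}).ncard = (τ '' Set.univ).ncard - 1 :=
    Set.ncard_diff_singleton_of_mem hc
  have hpos : 0 < chromNum G := chromNum_pos G
  omega

lemma main_aux : ∀ (n : ℕ) {V : Type u} [Fintype V] [Nonempty V]
    (G : SimpleGraph V) (σ : V → ℕ), IsProperColoring G σ → Fintype.card V ≤ n →
    ∀ c ∈ σ '' (Set.univ : Set V),
      ∃ X : Set V, X.ncard ≤ ((σ '' Set.univ).ncard - chromNum G) + 1 ∧
        (∃ x ∈ X, σ x = c) ∧ σ '' closedNbhd G X = σ '' Set.univ := by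
  intro n
  induction n using Nat.strong_induction_on with
  | _ n ih =>
    intro V _ _ G σ hσ hcard c hc
    classical
    have hCfin : (σ '' Set.univ).Finite := Set.finite_univ.image σ
    obtain ⟨x0, -, hx0⟩ := hc
    have hUne : ({u : V | σ u = c}).Nonempty := ⟨x0, hx0⟩
    obtain ⟨u, hu, humax⟩ := Set.exists_max_image {u : V | σ u = c}
      (fun u => (σ '' closedNbhd G {u}).ncard) (Set.toFinite _) hUne
    have hu : σ u = c := hu
    set S : Set ℕ := σ '' closedNbhd G {u} with hSdef
    have hSsub : S ⊆ σ '' Set.univ := Set.image_mono (Set.subset_univ _)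
    have hSfin : S.Finite := hCfin.subset hSsub
    by_cases hSC : S = σ '' Set.univ
    · refine ⟨{u}, ?_, ⟨u, rfl, hu⟩, hSC⟩
      rw [Set.ncard_singleton]
      exact Nat.le_add_left 1 _
    · -- S is a proper subset of the colours
      set S₀ : Set V := {x : V | σ x ∉ S} with hS₀def
      have hS₀ne : S₀.Nonempty := by
        rcases Set.exists_of_ssubset (ssubset_of_subset_of_ne hSsub hSC) with ⟨a, ha1, ha2⟩
        obtain ⟨x, -, rfl⟩ := ha1
        exact ⟨x, ha2⟩
      have huS : σ u ∈ S := ⟨u, mem_closedNbhd_self rfl, rfl⟩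
      have huS₀ : u ∉ S₀ := fun h => h huS
      haveI : Nonempty ↥S₀ := hS₀ne.to_subtype
      set G₀ : SimpleGraph ↥S₀ := G.induce S₀ with hG₀def
      set σ₀ : ↥S₀ → ℕ := fun z => σ z.1 with hσ₀def
      have hadj₀ : ∀ {a b : ↥S₀}, G₀.Adj a b → G.Adj a.1 b.1 := by
        intro a b h
    
        exact h
      have hadj₀' : ∀ {a b : V} (ha : a ∈ S₀) (hb : b ∈ S₀), G.Adj a b →
          G₀.Adj ⟨a, ha⟩ ⟨b, hb⟩ := by
        intro a b ha hb h
        exact h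
      have hσ₀p : IsProperColoring G₀ σ₀ := fun a b h => hσ (hadj₀ h)
      have himg₀ : σ₀ '' Set.univ = (σ '' Set.univ) \ S := by
        ext a
        constructor
        · rintro ⟨z, -, rfl⟩
          exact ⟨⟨z.1, Set.mem_univ _, rfl⟩, z.2⟩
        · rintro ⟨⟨x, -, rfl⟩, hns⟩
          exact ⟨⟨x, hns⟩, Set.mem_univ _, rfl⟩
      -- richness: χ(G) + 1 ≤ χ(G₀) + |S|
      have hrich : chromNum G + 1 ≤ chromNum G₀ + S.ncard := by
        by_contra hcon
        push_neg at hcon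
        have hcon' : chromNum G₀ + S.ncard ≤ chromNum G := by omega
        obtain ⟨ρ⟩ := chromNum_colorable G₀
        set M : ℕ := (Finset.univ.sup σ) + 1 with hMdef
        have hM : ∀ x : V, σ x < M := fun x =>
          Nat.lt_succ_of_le (Finset.le_sup (Finset.mem_univ x))
        set τ : V → ℕ := fun x => if hx : σ x ∈ S then σ x else M + (ρ ⟨x, hx⟩ : ℕ) with hτdef
        have hτin : ∀ (x : V), σ x ∈ S → τ x = σ x := fun x hx => dif_pos hx
        have hτout : ∀ (x : V) (hx : σ x ∉ S), τ x = M + (ρ ⟨x, hx⟩ : ℕ) :=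
          fun x hx => dif_neg hx
        have hτp : IsProperColoring G τ := by
          intro a b hadj
          by_cases ha : σ a ∈ S <;> by_cases hb : σ b ∈ S
          · rw [hτin a ha, hτin b hb]; exact hσ hadj
          · rw [hτin a ha, hτout b hb]
            exact Nat.ne_of_lt (lt_of_lt_of_le (hM a) (Nat.le_add_right M _))
          · rw [hτout a ha, hτin b hb]
            exact (Nat.ne_of_lt (lt_of_lt_of_le (hM b) (Nat.le_add_right M _))).symm
          · rw [hτout a ha, hτout b hb]
            have hne := ρ.valid (hadj₀' ha hb hadj)
            intro h
            exact hne (Fin.val_injective (Nat.add_left_cancel h))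
        have hsub2 : τ '' Set.univ ⊆
            S ∪ ((fun i : Fin (chromNum G₀) => M + (i : ℕ)) '' Set.univ) := by
          rintro a ⟨x, -, rfl⟩
          by_cases hx : σ x ∈ S
          · rw [hτin x hx]; exact Or.inl hx
          · rw [hτout x hx]; exact Or.inr ⟨ρ ⟨x, hx⟩, Set.mem_univ _, rfl⟩
        have hn1 : (τ '' Set.univ).ncard ≤ S.ncard + chromNum G₀ := by
          have h1 : (τ '' Set.univ).ncard ≤
              (S ∪ ((fun i : Fin (chromNum G₀) => M + (i : ℕ)) '' Set.univ)).ncard :=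
            Set.ncard_le_ncard hsub2 (hSfin.union (Set.finite_univ.image _))
          have h2 := Set.ncard_union_le S ((fun i : Fin (chromNum G₀) => M + (i : ℕ)) '' Set.univ)
          have h3 : ((fun i : Fin (chromNum G₀) => M + (i : ℕ)) '' Set.univ).ncard ≤
              (Set.univ : Set (Fin (chromNum G₀))).ncard :=
            Set.ncard_image_le Set.finite_univ
          have h4 : (Set.univ : Set (Fin (chromNum G₀))).ncard = chromNum G₀ := by
            rw [Set.ncard_univ, Nat.card_eq_fintype_card, Fintype.card_fin]
          omega
        have hn2 : chromNum G ≤ (τ '' Set.univ).ncard := Nat.sInf_le (colorable_ncard G τ hτp)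
        have himgτ : (τ '' Set.univ).ncard = chromNum G :=
          le_antisymm (hn1.trans (by omega)) hn2
        have hcτ : c ∈ τ '' Set.univ := by
          refine ⟨u, Set.mem_univ u, ?_⟩
          rw [hτin u huS, hu]
        obtain ⟨u', hu'c, hu'full⟩ := exists_full_vertex G τ hτp himgτ hcτ
        have hσu' : σ u' = c := by
          by_cases h : σ u' ∈ S
          · rwa [hτin u' h] at hu'c
          · exfalso
            rw [hτout u' h] at hu'c
            have h1 : c < M := by rw [← hx0]; exact hM x0
            omega
        -- S ⊆ σ '' N[u']
        have hSsub' : S ⊆ σ '' closedNbhd G {u'} := by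
          intro a haS
          have haτ : a ∈ τ '' Set.univ := by
            obtain ⟨x, hx1, hax⟩ := id haS
            have hxS : σ x ∈ S := by rw [hax]; exact haS
            exact ⟨x, Set.mem_univ _, by rw [hτin x hxS, hax]⟩
          rw [← hu'full] at haτ
          obtain ⟨w, hw1, hw2⟩ := haτ
          by_cases h : σ w ∈ S
          · rw [hτin w h] at hw2
            exact ⟨w, hw1, hw2⟩
          · exfalso
            rw [hτout w h] at hw2
            obtain ⟨y, -, hy⟩ := hSsub haS
            have := hM y
            omega
        -- a fresh colour in σ '' N[u'] \ S
        obtain ⟨z, hz⟩ := hS₀ne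
        have hz : σ z ∉ S := hz
        have hfz : τ z ∈ τ '' Set.univ := ⟨z, Set.mem_univ _, rfl⟩
        rw [← hu'full] at hfz
        obtain ⟨w, hw1, hw2⟩ := hfz
        have hwout : σ w ∉ S := by
          intro h
          rw [hτin w h, hτout z hz] at hw2
          have := hM w
          omega
        have hins : insert (σ w) S ⊆ σ '' closedNbhd G {u'} :=
          Set.insert_subset ⟨w, hw1, rfl⟩ hSsub'
        have hfin' : (σ '' closedNbhd G {u'}).Finite :=
          hCfin.subset (Set.image_mono (Set.subset_univ _))
        have hcard1 : S.ncard + 1 ≤ (σ '' closedNbhd G {u'}).ncard := by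
          have h5 := Set.ncard_le_ncard hins hfin'
          rwa [Set.ncard_insert_of_notMem hwout hSfin] at h5
        have hcard2 : (σ '' closedNbhd G {u'}).ncard ≤ S.ncard := humax u' hσu'
        omega
      -- apply the induction hypothesis to G₀
      have hcards : Fintype.card ↥S₀ < Fintype.card V := by
        have hss : S₀ ⊂ Set.univ := ⟨Set.subset_univ _, fun h => huS₀ (h (Set.mem_univ u))⟩
        have hlt : S₀.ncard < (Set.univ : Set V).ncard :=
          Set.ncard_lt_ncard hss Set.finite_univ
        have e1 : Fintype.card ↥S₀ = S₀.ncard := by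
          rw [← Nat.card_eq_fintype_card, Nat.card_coe_set_eq]
        have e2 : (Set.univ : Set V).ncard = Fintype.card V := by
          rw [Set.ncard_univ, Nat.card_eq_fintype_card]
        omega
      obtain ⟨z0, hz0⟩ := hS₀ne
      have hc₀ : σ₀ ⟨z0, hz0⟩ ∈ σ₀ '' Set.univ := ⟨⟨z0, hz0⟩, Set.mem_univ _, rfl⟩
      obtain ⟨X₀, hX₀card, -, hX₀cov⟩ := ih (Fintype.card ↥S₀) (lt_of_lt_of_le hcards hcard)
        G₀ σ₀ hσ₀p (le_refl _) _ hc₀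
      set X : Set V := insert u (Subtype.val '' X₀) with hXdef
      refine ⟨X, ?_, ⟨u, Set.mem_insert u _, hu⟩, ?_⟩
      · have h1 : X.ncard ≤ (Subtype.val '' X₀).ncard + 1 := Set.ncard_insert_le _ _
        have h2 : (Subtype.val '' X₀).ncard = X₀.ncard :=
          Set.ncard_image_of_injective _ Subtype.val_injective
        have hχ₀le : chromNum G₀ ≤ (σ₀ '' Set.univ).ncard :=
          Nat.sInf_le (colorable_ncard G₀ σ₀ hσ₀p)
        have hχle : chromNum G ≤ (σ '' Set.univ).ncard := Nat.sInf_le (colorable_ncard G σ hσ)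
        have hdiff : ((σ '' Set.univ) \ S).ncard = (σ '' Set.univ).ncard - S.ncard :=
          Set.ncard_diff hSsub hSfin
        have hsle : S.ncard ≤ (σ '' Set.univ).ncard := Set.ncard_le_ncard hSsub hCfin
        rw [himg₀] at hX₀card hχ₀le
        omega
      · apply Set.Subset.antisymm (Set.image_mono (Set.subset_univ _))
        intro a ha
        by_cases haS : a ∈ S
        · obtain ⟨x, hx1, hx2⟩ := haS
          exact ⟨x, closedNbhd_mono (Set.singleton_subset_iff.mpr (Set.mem_insert u _)) hx1, hx2⟩
        · have ha₀ : a ∈ σ₀ '' closedNbhd G₀ X₀ := by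
            rw [hX₀cov, himg₀]
            exact ⟨ha, haS⟩
          obtain ⟨w, hw1, hw2⟩ := ha₀
          refine ⟨(w : V), ?_, hw2⟩
          rcases hw1 with hw | ⟨x', hx', hadj⟩
          · exact Or.inl (Set.mem_insert_of_mem _ ⟨w, hw, rfl⟩)
          · exact Or.inr ⟨(x' : V), Set.mem_insert_of_mem _ ⟨x', hx', rfl⟩, hadj₀ hadj⟩

end RainbowAux

/-- Let `G` be a finite graph with at least one vertex, `k ≥ 0`,
`p = χ(G)+k`, and `σ` a proper colouring of `G` using exactly `p` colours. Then for
every colour class of `σ` (given by a colour `c` used by `σ`) there exists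
`X ⊆ V(G)` with `|X| ≤ k+1`, meeting that colour class, such that `N[X]` meets every
colour class, i.e. `|σ(N[X])| = p`. -/
theorem rainbow_closed_neighbourhood {V : Type*} [Fintype V] [Nonempty V]
    (G : SimpleGraph V) (k : ℕ) (σ : V → ℕ) (hσ : IsProperColoring G σ)
    (hp : (σ '' Set.univ).ncard = chromNum G + k) :
    ∀ c ∈ σ '' Set.univ, ∃ X : Set V, X.ncard ≤ k + 1 ∧ (∃ x ∈ X, σ x = c) ∧
      (σ '' closedNbhd G X).ncard = chromNum G + k := by
  intro c hc
  obtain ⟨X, h1, h2, h3⟩ := main_aux (Fintype.card V) G σ hσ (le_refl _) c hc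
  refine ⟨X, ?_, h2, ?_⟩
  · rw [hp] at h1
    omega
  · rw [h3, hp]
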